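/- If G is a connected prime graph (i.e., G has no clique separator) and u, v are two non-adjacent vertices of G, then {u, v} is a monophonic hull set of G: the monophonic convex hull of {u, v} equals V(G). -/

import Mathlib

open Set

variable {V : Type*}

/-- `p` is a triangle path: a path with no edge joining vertices at index
distance greater than 2 along the path. -/
def TPath (G : SimpleGraph V) {u v : V} (p : G.Walk u v) : Prop :=
  p.IsPath ∧ ∀ i j : ℕ, i + 2 < j →
    ∀ (hi : i < p.support.length) (hj : j < p.support.length),
      ¬ G.Adj (p.support.get ⟨i, hi⟩) (p.support.get ⟨j, hj⟩)

/-- `p` is a monophonic (induced) path: a path with no edge joining vertices at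
index distance greater than 1 along the path. -/
def MPath (G : SimpleGraph V) {u v : V} (p : G.Walk u v) : Prop :=
  p.IsPath ∧ ∀ i j : ℕ, i + 1 < j →
    ∀ (hi : i < p.support.length) (hj : j < p.support.length),
      ¬ G.Adj (p.support.get ⟨i, hi⟩) (p.support.get ⟨j, hj⟩)

/-- `p` is a geodesic (shortest path). -/
def GPath (G : SimpleGraph V) {u v : V} (p : G.Walk u v) : Prop :=
  p.IsPath ∧ ∀ q : G.Walk u v, p.length ≤ q.length

/-- `S` is convex in the triangle path convexity. -/
def TConvex (G : SimpleGraph V) (S : Set V) : Prop :=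
  ∀ ⦃u v : V⦄, u ∈ S → v ∈ S → ∀ p : G.Walk u v, TPath G p → ∀ w ∈ p.support, w ∈ S

/-- `S` is convex in the monophonic convexity. -/
def MConvex (G : SimpleGraph V) (S : Set V) : Prop :=
  ∀ ⦃u v : V⦄, u ∈ S → v ∈ S → ∀ p : G.Walk u v, MPath G p → ∀ w ∈ p.support, w ∈ S

/-- `S` is convex in the geodetic convexity. -/
def GConvex (G : SimpleGraph V) (S : Set V) : Prop :=
  ∀ ⦃u v : V⦄, u ∈ S → v ∈ S → ∀ p : G.Walk u v, GPath G p → ∀ w ∈ p.support, w ∈ S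

/-- `S` is `P₃`-convex: no vertex outside `S` has two neighbours in `S`. -/
def P3Convex (G : SimpleGraph V) (S : Set V) : Prop :=
  ∀ w ∉ S, ∀ a ∈ S, ∀ b ∈ S, G.Adj w a → G.Adj w b → a = b

/-- The triangle path interval of `S`. -/
def TInterval (G : SimpleGraph V) (S : Set V) : Set V :=
  S ∪ {w | ∃ u ∈ S, ∃ v ∈ S, ∃ p : G.Walk u v, TPath G p ∧ w ∈ p.support}

/-- The monophonic interval of `S`. -/
def MInterval (G : SimpleGraph V) (S : Set V) : Set V :=
  S ∪ {w | ∃ u ∈ S, ∃ v ∈ S, ∃ p : G.Walk u v, MPath G p ∧ w ∈ p.support}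

/-- The geodetic interval of `S`. -/
def GInterval (G : SimpleGraph V) (S : Set V) : Set V :=
  S ∪ {w | ∃ u ∈ S, ∃ v ∈ S, ∃ p : G.Walk u v, GPath G p ∧ w ∈ p.support}

/-- The `P₃`-interval of `S`: `S` together with the vertices having at least two
neighbours in `S`. -/
def P3Interval (G : SimpleGraph V) (S : Set V) : Set V :=
  S ∪ {w | w ∉ S ∧ ∃ a ∈ S, ∃ b ∈ S, a ≠ b ∧ G.Adj w a ∧ G.Adj w b}

/-- The convex hull of `S` in the triangle path convexity. -/
def THull (G : SimpleGraph V) (S : Set V) : Set V :=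
  ⋂₀ {C : Set V | S ⊆ C ∧ TConvex G C}

/-- The convex hull of `S` in the monophonic convexity. -/
def MHull (G : SimpleGraph V) (S : Set V) : Set V :=
  ⋂₀ {C : Set V | S ⊆ C ∧ MConvex G C}

/-- The convex hull of `S` in the geodetic convexity. -/
def GHull (G : SimpleGraph V) (S : Set V) : Set V :=
  ⋂₀ {C : Set V | S ⊆ C ∧ GConvex G C}

/-- `K` separates the vertices `a` and `b`: both lie outside `K` and every walk
between them meets `K`. -/
def Separates (G : SimpleGraph V) (K : Set V) (a b : V) : Prop :=
  a ∉ K ∧ b ∉ K ∧ ∀ p : G.Walk a b, ∃ w ∈ p.support, w ∈ K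

/-- `K` is a separator of `G`. -/
def IsSeparator (G : SimpleGraph V) (K : Set V) : Prop :=
  ∃ a b : V, Separates G K a b

/-- `G` is prime: it has no clique separator. -/
def IsPrime (G : SimpleGraph V) : Prop :=
  ¬ ∃ C : Set V, G.IsClique C ∧ IsSeparator G C

/-- `K` is a minimal separator for `a` and `b`. -/
def IsMinSeparator (G : SimpleGraph V) (K : Set V) (a b : V) : Prop :=
  Separates G K a b ∧ ∀ K' : Set V, K' ⊂ K → ¬ Separates G K' a b

/-- `W` induces a maximal prime subgraph of `G`. -/
def IsMPSubgraph (G : SimpleGraph V) (W : Set V) : Prop :=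
  IsPrime (G.induce W) ∧ ∀ W' : Set V, W ⊆ W' → IsPrime (G.induce W') → W' = W

/-- `C` is the vertex set of a connected component of `G - S`. -/
def IsCompOf (G : SimpleGraph V) (S C : Set V) : Prop :=
  C.Nonempty ∧ C ∩ S = ∅ ∧
  (∀ x ∈ C, ∀ y ∈ C, ∃ p : G.Walk x y, ∀ w ∈ p.support, w ∈ C) ∧
  (∀ x ∈ C, ∀ y : V, y ∉ S → G.Adj x y → y ∈ C)


namespace StmtAux

variable {V : Type*} {G : SimpleGraph V}

lemma support_get_eq {a b : V} (p : G.Walk a b) (i : ℕ) (hi : i < p.support.length) :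
    p.support.get ⟨i, hi⟩ = p.getVert i := by
  induction p generalizing i with
  | nil =>
    simp only [SimpleGraph.Walk.support_nil, List.length_singleton] at hi
    interval_cases i
    rfl
  | cons h q ih =>
    cases i with
    | zero => rfl
    | succ i =>
      simp only [SimpleGraph.Walk.support_cons] at hi ⊢
      have hi' : i < q.support.length := by
        simp only [List.length_cons] at hi; omega
      simpa [SimpleGraph.Walk.getVert_cons_succ] using ih i hi'

lemma exists_split {a b : V} (p : G.Walk a b) :
    ∀ i, i ≤ p.length → ∃ (q : G.Walk a (p.getVert i)) (r : G.Walk (p.getVert i) b),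
      q.length = i ∧ q.length + r.length = p.length ∧
      (∀ w ∈ q.support, w ∈ p.support) ∧ (∀ w ∈ r.support, w ∈ p.support) := by
  induction p with
  | nil =>
    intro i hi
    simp only [SimpleGraph.Walk.length_nil, Nat.le_zero] at hi
    subst hi
    exact ⟨SimpleGraph.Walk.nil, SimpleGraph.Walk.nil, rfl, rfl, by simp, by simp⟩
  | cons h p' ih =>
    intro i hi
    cases i with
    | zero =>
      exact ⟨SimpleGraph.Walk.nil, SimpleGraph.Walk.cons h p', rfl, by show 0 + _ = _; rw [Nat.zero_add]; rfl,
        by intro w hw; rw [List.mem_singleton.mp hw]; exact (SimpleGraph.Walk.cons h p').start_mem_support,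
        fun w hw => hw⟩
    | succ i =>
      obtain ⟨q, r, h1, h2, h3, h4⟩ := ih i (by
        simpa [Nat.succ_le_succ_iff] using hi)
      refine ⟨SimpleGraph.Walk.cons h q, r, by simp [h1], by simp [← h2]; ring, ?_, ?_⟩
      · intro w hw
        replace hw : w ∈ (SimpleGraph.Walk.cons h q).support := hw
        simp only [SimpleGraph.Walk.support_cons, List.mem_cons] at hw ⊢
        rcases hw with rfl | hw
        · exact Or.inl rfl
        · exact Or.inr (h3 w hw)
      · intro w hw
        simp only [SimpleGraph.Walk.support_cons, List.mem_cons]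
        exact Or.inr (h4 w hw)

lemma exists_mpath (T : Set V) :
    ∀ n {a b : V} (p : G.Walk a b), p.length ≤ n → (∀ w ∈ p.support, w ∈ T) →
      ∃ q : G.Walk a b, MPath G q ∧ ∀ w ∈ q.support, w ∈ T := by
  classical
  intro n
  induction n using Nat.strong_induction_on with
  | _ n ih =>
    intro a b p hlen hsup
    set p₁ := p.bypass with hp₁
    have hpath : p₁.IsPath := p.bypass_isPath
    have hsup₁ : ∀ w ∈ p₁.support, w ∈ T := fun w hw => hsup w (p.support_bypass_subset hw)
    by_cases hm : MPath G p₁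
    · exact ⟨p₁, hm, hsup₁⟩
    · rw [MPath] at hm
      push_neg at hm
      obtain ⟨i, j, hij, hi, hj, hchord⟩ := hm hpath
      rw [support_get_eq p₁ i hi, support_get_eq p₁ j hj] at hchord
      have hjle : j ≤ p₁.length := by
        have := hj; rw [SimpleGraph.Walk.length_support] at this; omega
      have hile : i ≤ p₁.length := by omega
      obtain ⟨q₁, r₁, hq₁, hs₁, hq₁sup, _⟩ := exists_split p₁ i hile
      obtain ⟨q₂, r₂, hq₂, hs₂, _, hr₂sup⟩ := exists_split p₁ j hjle
      set w' : G.Walk a b := q₁.append (SimpleGraph.Walk.cons hchord r₂) with hw'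
      have hlt : w'.length < p₁.length := by
        simp only [hw', SimpleGraph.Walk.length_append, SimpleGraph.Walk.length_cons]
        omega
      have hle : p₁.length ≤ n := le_trans (p.length_bypass_le) hlen
      refine ih w'.length (lt_of_lt_of_le hlt hle) w' le_rfl ?_
      intro w hw
      rw [hw', SimpleGraph.Walk.mem_support_append_iff] at hw
      rcases hw with hw | hw
      · exact hsup₁ w (hq₁sup w hw)
      · simp only [SimpleGraph.Walk.support_cons, List.mem_cons] at hw
        rcases hw with rfl | hw
        · refine hsup₁ _ ?_
          rw [SimpleGraph.Walk.mem_support_iff_exists_getVert]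
          exact ⟨i, rfl, hile⟩
        · exact hsup₁ w (hr₂sup w hw)

lemma mpath_internal {a b : V} (hab : a ≠ b) (hnadj : ¬ G.Adj a b)
    {q : G.Walk a b} (hq : q.IsPath) :
    q.getVert 1 ∈ q.support ∧ q.getVert 1 ≠ a ∧ q.getVert 1 ≠ b := by
  have h2 : 2 ≤ q.length := by
    by_contra hcon
    push_neg at hcon
    interval_cases h : q.length
    · exact hab (q.eq_of_length_eq_zero h)
    · have := q.adj_getVert_succ (by omega : 0 < q.length)
      rw [q.getVert_zero, show q.getVert 1 = b from q.getVert_of_length_le (by omega)] at this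
      exact hnadj this
  have hsuplen : q.support.length = q.length + 1 := q.length_support
  have hmem : q.getVert 1 ∈ q.support := by
    rw [SimpleGraph.Walk.mem_support_iff_exists_getVert]
    exact ⟨1, rfl, by omega⟩
  have hnodup := hq.support_nodup
  refine ⟨hmem, ?_, ?_⟩
  · intro hcontra
    have h0 : q.support.get ⟨0, by omega⟩ = a := by
      rw [support_get_eq]; exact q.getVert_zero
    have h1 : q.support.get ⟨1, by omega⟩ = q.getVert 1 := support_get_eq q 1 (by omega)
    have := (List.Nodup.get_inj_iff hnodup).mp (by rw [h0, h1, hcontra] :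
      q.support.get ⟨1, by omega⟩ = q.support.get ⟨0, by omega⟩)
    simp at this
  · intro hcontra
    have h1 : q.support.get ⟨1, by omega⟩ = q.getVert 1 := support_get_eq q 1 (by omega)
    have hL : q.support.get ⟨q.length, by omega⟩ = b := by
      rw [support_get_eq]; exact q.getVert_length
    have := (List.Nodup.get_inj_iff hnodup).mp (by rw [h1, hL, hcontra] :
      q.support.get ⟨1, by omega⟩ = q.support.get ⟨q.length, by omega⟩)
    simp only [Fin.mk.injEq] at this
    omega

lemma mhull_subset (S : Set V) : S ⊆ MHull G S := by
  intro s hs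
  intro C hC
  exact hC.1 hs

lemma mhull_mconvex (S : Set V) : MConvex G (MHull G S) := by
  intro a b ha hb p hp w hw
  intro C hC
  exact hC.2 (ha C hC) (hb C hC) p hp w hw

end StmtAux

theorem stmt_5 [Fintype V] (G : SimpleGraph V) (hconn : G.Connected)
    (hprime : IsPrime G) (u v : V) (huv : u ≠ v) (hadj : ¬ G.Adj u v) :
    MHull G {u, v} = Set.univ := by
  classical
  by_contra hne
  set H : Set V := MHull G {u, v} with hH
  have huH : u ∈ H := StmtAux.mhull_subset {u, v} (by simp)
  have hvH : v ∈ H := StmtAux.mhull_subset {u, v} (by simp)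
  have hconv : MConvex G H := StmtAux.mhull_mconvex {u, v}
  obtain ⟨x, hx⟩ : ∃ x, x ∉ H := by
    by_contra hall
    push_neg at hall
    exact hne (Set.eq_univ_iff_forall.mpr hall)
  -- the component of x in G - H
  set C : Set V := {y | ∃ p : G.Walk x y, ∀ w ∈ p.support, w ∉ H} with hC
  have hxC : x ∈ C := ⟨SimpleGraph.Walk.nil, by simpa using hx⟩
  have hCH : ∀ y ∈ C, y ∉ H := by
    rintro y ⟨p, hp⟩
    exact hp y p.end_mem_support
  have hCclose : ∀ y ∈ C, ∀ z : V, z ∉ H → G.Adj y z → z ∈ C := by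
    rintro y ⟨p, hp⟩ z hz hyz
    refine ⟨p.concat hyz, ?_⟩
    intro w hw
    simp only [SimpleGraph.Walk.support_concat, List.concat_eq_append, List.mem_append,
      List.mem_singleton] at hw
    rcases hw with hw | rfl
    · exact hp w hw
    · exact hz
  -- the neighborhood of C inside H
  set K : Set V := {s | s ∈ H ∧ ∃ c ∈ C, G.Adj s c} with hK
  -- K is a clique
  have hclique : G.IsClique K := by
    rintro a ⟨haH, c₁, hc₁, hac₁⟩ b ⟨hbH, c₂, hc₂, hbc₂⟩ hab
    by_contra hnadj
    obtain ⟨p₁, hp₁⟩ := hc₁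
    obtain ⟨p₂, hp₂⟩ := hc₂
    set T : Set V := {w | w ∉ H ∨ w = a ∨ w = b} with hT
    set big : G.Walk a b :=
      SimpleGraph.Walk.cons hac₁ ((p₁.reverse.append p₂).concat hbc₂.symm) with hbig
    have hbigT : ∀ w ∈ big.support, w ∈ T := by
      intro w hw
      simp only [hbig, SimpleGraph.Walk.support_cons, List.mem_cons] at hw
      rcases hw with rfl | hw
      · exact Or.inr (Or.inl rfl)
      simp only [SimpleGraph.Walk.support_concat, List.concat_eq_append, List.mem_append,
        List.mem_singleton] at hw
      rcases hw with hw | rfl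
      · rw [SimpleGraph.Walk.mem_support_append_iff] at hw
        rcases hw with hw | hw
        · rw [SimpleGraph.Walk.support_reverse, List.mem_reverse] at hw
          exact Or.inl (hp₁ w hw)
        · exact Or.inl (hp₂ w hw)
      · exact Or.inr (Or.inr rfl)
    obtain ⟨q, hq, hqT⟩ := StmtAux.exists_mpath T big.length big le_rfl hbigT
    have hallH : ∀ w ∈ q.support, w ∈ H := hconv haH hbH q hq
    obtain ⟨hmem, hna, hnb⟩ := StmtAux.mpath_internal hab hnadj hq.1
    rcases hqT _ hmem with hnH | h | h
    · exact hnH (hallH _ hmem)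
    · exact hna h
    · exact hnb h
  -- one of u, v is not in K
  have hw₀ : ∃ w₀, w₀ ∈ H ∧ w₀ ∉ K := by
    by_cases hu : u ∈ K
    · refine ⟨v, hvH, fun hv' => ?_⟩
      exact hadj (hclique hu hv' huv)
    · exact ⟨u, huH, hu⟩
  obtain ⟨w₀, hw₀H, hw₀K⟩ := hw₀
  -- every walk from a vertex of C to a vertex of H meets K
  have key : ∀ (y z : V) (p : G.Walk y z), y ∈ C → z ∈ H → ∃ w ∈ p.support, w ∈ K := by
    intro y z p
    induction p with
    | nil => intro hy hz; exact absurd hz (hCH _ hy)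
    | @cons y m z h q ih =>
      intro hy hz
      by_cases hmH : m ∈ H
      · exact ⟨m, by simp, hmH, y, hy, h.symm⟩
      · obtain ⟨w, hw, hwK⟩ := ih (hCclose y hy m hmH h) hz
        exact ⟨w, by simp [hw], hwK⟩
  -- K is a clique separator, contradiction
  refine hprime ⟨K, hclique, x, w₀, ?_, hw₀K, ?_⟩
  · intro hxK
    exact hx hxK.1
  · intro p
    exact key x w₀ p hxC hw₀H
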